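/- For the cosine basis $m_1(s) = 1/\sqrt{t}$, $m_i(s) = \sqrt{2/t}\cos((i-1)\pi s/t)$ for $i \ge 2$ on $[0,t]$, the truncation error of the Brownian motion expansion satisfies $\sup_{0 \le s \le t} \mathbb{E}\big[W(s) - \sum_{i=1}^K \xi_i \int_0^s m_i(\tau)d\tau\big]^2 = O(t/K)$ as $K \to \infty$. -/

import Mathlib

open MeasureTheory ProbabilityTheory

open Real in
private lemma stmt13_int_cos_mul {c : ℝ} (hc : c ≠ 0) (a b : ℝ) :
    ∫ x in a..b, Real.cos (c * x) = (Real.sin (c * b) - Real.sin (c * a)) / c := by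
  rw [intervalIntegral.integral_comp_mul_left (fun x => Real.cos x) hc,
    integral_cos, smul_eq_mul]
  ring

open Real in
private lemma stmt13_int_cos_int_zero {t : ℝ} (ht : 0 < t) {k : ℤ} (hk : k ≠ 0) :
    ∫ x in (0:ℝ)..t, Real.cos (((k:ℝ) * π / t) * x) = 0 := by
  have hc : ((k:ℝ) * π / t) ≠ 0 := by
    have : (k:ℝ) ≠ 0 := Int.cast_ne_zero.mpr hk
    have hπ := Real.pi_pos
    positivity
  rw [stmt13_int_cos_mul hc]
  rw [show ((k:ℝ) * π / t) * t = k * π by field_simp]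
  simp [Real.sin_int_mul_pi]

private lemma stmt13_cos_cont (c : ℝ) : Continuous (fun x : ℝ => Real.cos (c * x)) :=
  Real.continuous_cos.comp (continuous_const.mul continuous_id)

open Real in
private lemma stmt13_ortho {t : ℝ} (ht : 0 < t) {m : ℕ → ℝ → ℝ}
    (hm0 : m 0 = fun _ => 1 / Real.sqrt t)
    (hm : ∀ i : ℕ, 1 ≤ i →
      m i = fun s => Real.sqrt (2 / t) * Real.cos (i * π * s / t))
    (i j : ℕ) :
    ∫ x in (0:ℝ)..t, m i x * m j x = (if i = j then 1 else 0) := by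
  have ht' : t ≠ 0 := ne_of_gt ht
  have h2t : Real.sqrt (2/t) * Real.sqrt (2/t) = 2/t := Real.mul_self_sqrt (by positivity)
  have hmix : ∀ k : ℕ, 1 ≤ k → ∫ x in (0:ℝ)..t, m 0 x * m k x = 0 := by
    intro k hk
    have h1 : ∫ x in (0:ℝ)..t, m 0 x * m k x
        = ∫ x in (0:ℝ)..t, (1 / Real.sqrt t * Real.sqrt (2/t)) *
            Real.cos ((((k:ℤ):ℝ) * π / t) * x) := by
      apply intervalIntegral.integral_congr
      intro x _
      simp only [hm0, hm k hk]
      push_cast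
      ring_nf
    rw [h1, intervalIntegral.integral_const_mul,
      stmt13_int_cos_int_zero ht
        (by exact_mod_cast Nat.one_le_iff_ne_zero.mp hk : (k:ℤ) ≠ 0), mul_zero]
  by_cases hi : i = 0
  · by_cases hj : j = 0
    · subst hi hj
      simp only [hm0, if_pos rfl, ↓reduceIte]
      rw [intervalIntegral.integral_const, smul_eq_mul, sub_zero,
        div_mul_div_comm, one_mul, Real.mul_self_sqrt ht.le]
      field_simp
    · subst hi
      rw [if_neg (by omega), hmix j (by omega)]
  · by_cases hj : j = 0
    · subst hj
      rw [if_neg (by omega), show (∫ x in (0:ℝ)..t, m i x * m 0 x)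
          = ∫ x in (0:ℝ)..t, m 0 x * m i x from
          intervalIntegral.integral_congr (fun x _ => mul_comm _ _),
        hmix i (by omega)]
    · by_cases hij : i = j
      · subst hij
        rw [if_pos rfl]
        have h1 : ∫ x in (0:ℝ)..t, m i x * m i x
            = ∫ x in (0:ℝ)..t, (1/t + (1/t) * Real.cos ((((2*i : ℤ):ℝ) * π / t) * x)) := by
          apply intervalIntegral.integral_congr
          intro x _
          simp only [hm i (by omega)]
          have e1 : Real.sqrt (2/t) * Real.cos (i * π * x / t) *
              (Real.sqrt (2/t) * Real.cos (i * π * x / t))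
              = (Real.sqrt (2/t) * Real.sqrt (2/t)) * Real.cos (i * π * x / t) ^ 2 := by ring
          rw [e1, h2t, Real.cos_sq,
            show 2 * ((i:ℝ) * π * x / t) = (((2*i : ℤ):ℝ) * π / t) * x by push_cast; ring]
          ring
        rw [h1, intervalIntegral.integral_add (f := fun _ => 1/t)
            (g := fun x => (1/t) * Real.cos ((((2*i : ℤ):ℝ) * π / t) * x)) intervalIntegrable_const
            ((continuous_const.mul (stmt13_cos_cont _)).intervalIntegrable _ _),
          intervalIntegral.integral_const_mul,
          stmt13_int_cos_int_zero ht (by omega : (2*i : ℤ) ≠ 0), mul_zero, add_zero,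
          intervalIntegral.integral_const, smul_eq_mul, sub_zero]
        field_simp
      · rw [if_neg hij]
        have h1 : ∫ x in (0:ℝ)..t, m i x * m j x
            = ∫ x in (0:ℝ)..t, ((1/t) * Real.cos (((((i:ℤ) - (j:ℤ) : ℤ):ℝ) * π / t) * x)
                + (1/t) * Real.cos (((((i:ℤ) + (j:ℤ) : ℤ):ℝ) * π / t) * x)) := by
          apply intervalIntegral.integral_congr
          intro x _
          simp only [hm i (by omega), hm j (by omega)]
          have expand : Real.cos ((i * π * x / t) - (j * π * x / t))
              + Real.cos ((i * π * x / t) + (j * π * x / t))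
              = 2 * (Real.cos (i * π * x / t) * Real.cos (j * π * x / t)) := by
            rw [Real.cos_sub, Real.cos_add]; ring
          have e1 : Real.sqrt (2/t) * Real.cos (i * π * x / t) *
              (Real.sqrt (2/t) * Real.cos (j * π * x / t))
              = (Real.sqrt (2/t) * Real.sqrt (2/t)) *
                (Real.cos (i * π * x / t) * Real.cos (j * π * x / t)) := by ring
          rw [e1, h2t,
            show (2/t) * (Real.cos (i * π * x / t) * Real.cos (j * π * x / t))
              = (1/t) * (2 * (Real.cos (i * π * x / t) * Real.cos (j * π * x / t))) by ring,
            ← expand,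
            show (i * π * x / t) - (j * π * x / t) = ((((i:ℤ) - (j:ℤ) : ℤ):ℝ) * π / t) * x
              by push_cast; ring,
            show ((i:ℝ) * π * x / t) + (j * π * x / t) = ((((i:ℤ) + (j:ℤ) : ℤ):ℝ) * π / t) * x
              by push_cast; ring]
          ring
        rw [h1, intervalIntegral.integral_add
            (f := fun x => (1/t) * Real.cos (((((i:ℤ) - (j:ℤ) : ℤ):ℝ) * π / t) * x))
            (g := fun x => (1/t) * Real.cos (((((i:ℤ) + (j:ℤ) : ℤ):ℝ) * π / t) * x))
            ((continuous_const.mul (stmt13_cos_cont _)).intervalIntegrable _ _)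
            ((continuous_const.mul (stmt13_cos_cont _)).intervalIntegrable _ _),
          intervalIntegral.integral_const_mul, intervalIntegral.integral_const_mul,
          stmt13_int_cos_int_zero ht (by omega : ((i:ℤ) - (j:ℤ)) ≠ 0),
          stmt13_int_cos_int_zero ht (by omega : ((i:ℤ) + (j:ℤ)) ≠ 0)]
        ring

open Real in
private lemma stmt13_coeff_sq {t : ℝ} (ht : 0 < t) {m : ℕ → ℝ → ℝ}
    (hm : ∀ i : ℕ, 1 ≤ i →
      m i = fun s => Real.sqrt (2 / t) * Real.cos (i * π * s / t))
    (s : ℝ) {i : ℕ} (hi : 1 ≤ i) :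
    (∫ τ in (0:ℝ)..s, m i τ)^2
      = (2*t/π^2) * (1/(i:ℝ)^2 * Real.sin (π * i * (s/t))^2) := by
  have ht' : t ≠ 0 := ne_of_gt ht
  have hπ := Real.pi_pos
  have hi' : (0:ℝ) < i := by exact_mod_cast hi
  have hc : ((i:ℝ) * π / t) ≠ 0 := by positivity
  have h1 : ∫ τ in (0:ℝ)..s, m i τ
      = ∫ τ in (0:ℝ)..s, Real.sqrt (2/t) * Real.cos (((i:ℝ) * π / t) * τ) := by
    apply intervalIntegral.integral_congr
    intro τ _
    rw [hm i hi]
    ring_nf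
  rw [h1, intervalIntegral.integral_const_mul, stmt13_int_cos_mul hc, mul_zero, Real.sin_zero,
    sub_zero, show ((i:ℝ) * π / t) * s = π * i * (s/t) by ring]
  rw [mul_pow, div_pow, Real.sq_sqrt (by positivity : (0:ℝ) ≤ 2/t)]
  field_simp

open Real in
private lemma stmt13_cos_series {x : ℝ} (hx : x ∈ Set.Icc (0:ℝ) 1) :
    HasSum (fun n : ℕ => 1 / (n : ℝ) ^ 2 * Real.cos (2 * π * n * x))
      (π ^ 2 * (x ^ 2 - x + 1/6)) := by
  have h := hasSum_one_div_nat_pow_mul_cos (k := 1) one_ne_zero hx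
  have heval : (Polynomial.map (algebraMap ℚ ℝ) (Polynomial.bernoulli 2)).eval x
      = x ^ 2 - x + 1/6 := by
    simp [Polynomial.bernoulli, Finset.sum_range_succ, bernoulli, bernoulli'_two]
    ring
  rw [show 2 * 1 = 2 from rfl, heval] at h
  convert h using 1
  rw [show Nat.factorial 2 = 2 from rfl]
  norm_num
  exact Or.inl (by ring)

open Real in
private lemma stmt13_sin_series {x : ℝ} (hx : x ∈ Set.Icc (0:ℝ) 1) :
    HasSum (fun n : ℕ => 1 / (n : ℝ) ^ 2 * Real.sin (π * n * x) ^ 2)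
      (π ^ 2 / 2 * (x - x ^ 2)) := by
  have h0 := stmt13_cos_series (Set.left_mem_Icc.mpr zero_le_one)
  have hx' := stmt13_cos_series hx
  simp only [mul_zero, Real.cos_zero, mul_one] at h0
  have h := (h0.sub hx').div_const 2
  convert h using 1
  · rfl
  · funext n
    rw [Real.sin_sq_eq_half_sub]
    ring_nf
  · ring

private lemma stmt13_coeFn_sum {α : Type*} [MeasurableSpace α] {μ : Measure α}
    {p : ENNReal} {ι : Type*} (s : Finset ι) (c : ι → ℝ) (f : ι → Lp ℝ p μ) :
    ⇑(∑ i ∈ s, c i • f i) =ᵐ[μ] fun a => ∑ i ∈ s, c i * f i a := by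
  induction s using Finset.cons_induction with
  | empty => simp only [Finset.sum_empty]; exact Lp.coeFn_zero ℝ p μ
  | cons i s his ih =>
      rw [Finset.sum_cons]
      filter_upwards [Lp.coeFn_add (c i • f i) (∑ j ∈ s, c j • f j),
        Lp.coeFn_smul (c i) (f i), ih] with a h1 h2 h3
      simp only [h1, Pi.add_apply, h2, Pi.smul_apply, smul_eq_mul, h3,
        Finset.sum_cons]

open Real in
theorem stmt_13 {Ω : Type*} [MeasurableSpace Ω] (P : Measure Ω) [IsProbabilityMeasure P]
    (t : ℝ) (ht : 0 < t)
    (μ : Measure ℝ) (hμ : μ = volume.restrict (Set.Icc 0 t))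
    (I : Lp ℝ 2 μ →ₗᵢ[ℝ] Lp ℝ 2 P)
    (hGauss : ∀ f : Lp ℝ 2 μ, Measure.map (⇑(I f)) P = gaussianReal 0 (‖f‖₊ ^ 2))
    (hIndep : ∀ g : ℕ → Lp ℝ 2 μ,
      Pairwise (fun i j => (inner ℝ (g i) (g j) : ℝ) = 0) →
      iIndepFun (fun i => ⇑(I (g i))) P)
    (m : ℕ → ℝ → ℝ)
    (hm0 : m 0 = fun _ => 1 / Real.sqrt t)
    (hm : ∀ i : ℕ, 1 ≤ i →
      m i = fun s => Real.sqrt (2 / t) * Real.cos (i * Real.pi * s / t))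
    (e : ℕ → Lp ℝ 2 μ) (he : ∀ i, (e i : ℝ → ℝ) =ᵐ[μ] m i)
    (ind : ℝ → Lp ℝ 2 μ)
    (hind : ∀ s ∈ Set.Icc 0 t, (ind s : ℝ → ℝ) =ᵐ[μ] Set.indicator (Set.Icc 0 s) 1)
    (W : ℝ → Ω → ℝ)
    (hW : ∀ s ∈ Set.Icc 0 t, W s =ᵐ[P] ⇑(I (ind s)))
    (ξ : ℕ → Ω → ℝ) (hξ : ∀ i, ξ i = ⇑(I (e i))) :
    ∃ c : ℝ, 0 < c ∧ ∀ K : ℕ, 1 ≤ K → ∀ s ∈ Set.Icc 0 t,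
      ∫ ω, (W s ω - ∑ i ∈ Finset.range K, (∫ τ in (0 : ℝ)..s, m i τ) * ξ i ω) ^ 2 ∂P
        ≤ c * t / K := by
  have ht' : t ≠ 0 := ne_of_gt ht
  have hπ := Real.pi_pos
  refine ⟨1, one_pos, ?_⟩
  intro K hK s hs
  obtain ⟨hs0, hst⟩ := hs
  have hK' : (0:ℝ) < K := by exact_mod_cast hK
  set x : ℝ := s / t with hxdef
  have hx : x ∈ Set.Icc (0:ℝ) 1 :=
    ⟨div_nonneg hs0 ht.le, (div_le_one ht).mpr hst⟩
  set a : ℕ → ℝ := fun i => ∫ τ in (0:ℝ)..s, m i τ with ha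
  set g : ℕ → ℝ := fun n => 1 / (n:ℝ)^2 * Real.sin (π * n * x)^2 with hg
  have hgsum : HasSum g (π ^ 2 / 2 * (x - x ^ 2)) := stmt13_sin_series hx
  set L : ℝ := π ^ 2 / 2 * (x - x ^ 2) with hL
  -- inner products of the basis
  have hinner_ee : ∀ i j, (inner ℝ (e i) (e j) : ℝ) = if i = j then 1 else 0 := by
    intro i j
    rw [MeasureTheory.L2.inner_def]
    have h1 : ∫ τ, (inner ℝ (e i τ) (e j τ) : ℝ) ∂μ = ∫ τ, m i τ * m j τ ∂μ := by
      refine integral_congr_ae ?_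
      filter_upwards [he i, he j] with τ h1 h2
      simp [RCLike.inner_apply, h1, h2, mul_comm]
    rw [h1, hμ, integral_Icc_eq_integral_Ioc, ← intervalIntegral.integral_of_le ht.le,
      stmt13_ortho ht hm0 hm i j]
  have hinner_ind_e : ∀ i, (inner ℝ (ind s) (e i) : ℝ) = a i := by
    intro i
    rw [MeasureTheory.L2.inner_def]
    have h1 : ∫ τ, (inner ℝ (ind s τ) (e i τ) : ℝ) ∂μ
        = ∫ τ, Set.indicator (Set.Icc 0 s) (m i) τ ∂μ := by
      refine integral_congr_ae ?_
      filter_upwards [hind s ⟨hs0, hst⟩, he i] with τ h1 h2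
      simp only [RCLike.inner_apply, RCLike.conj_to_real, h1, h2]
      by_cases hτ : τ ∈ Set.Icc 0 s
      · simp [Set.indicator_of_mem hτ]
      · simp [Set.indicator_of_notMem hτ]
    rw [h1, hμ, integral_indicator measurableSet_Icc,
      Measure.restrict_restrict measurableSet_Icc,
      show Set.Icc (0:ℝ) s ∩ Set.Icc 0 t = Set.Icc 0 s from
        Set.inter_eq_left.mpr (Set.Icc_subset_Icc le_rfl hst),
      integral_Icc_eq_integral_Ioc, ← intervalIntegral.integral_of_le hs0]
  have hnorm_ind : ‖ind s‖ ^ 2 = s := by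
    rw [← real_inner_self_eq_norm_sq, MeasureTheory.L2.inner_def]
    have h1 : ∫ τ, (inner ℝ (ind s τ) (ind s τ) : ℝ) ∂μ
        = ∫ τ, Set.indicator (Set.Icc 0 s) (fun _ => (1:ℝ)) τ ∂μ := by
      refine integral_congr_ae ?_
      filter_upwards [hind s ⟨hs0, hst⟩] with τ h1
      simp only [RCLike.inner_apply, RCLike.conj_to_real, h1]
      by_cases hτ : τ ∈ Set.Icc 0 s
      · simp [Set.indicator_of_mem hτ]
      · simp [Set.indicator_of_notMem hτ]
    rw [h1, hμ, integral_indicator measurableSet_Icc,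
      Measure.restrict_restrict measurableSet_Icc,
      show Set.Icc (0:ℝ) s ∩ Set.Icc 0 t = Set.Icc 0 s from
        Set.inter_eq_left.mpr (Set.Icc_subset_Icc le_rfl hst)]
    simp [Real.volume_Icc, ENNReal.toReal_ofReal hs0, hs0]
  -- the approximation error as a norm
  set f : Lp ℝ 2 μ := ind s - ∑ i ∈ Finset.range K, a i • e i with hf
  have hIf : ⇑(I f) =ᵐ[P]
      fun ω => I (ind s) ω - ∑ i ∈ Finset.range K, a i * (I (e i)) ω := by
    have hmap : I f = I (ind s) - ∑ i ∈ Finset.range K, a i • I (e i) := by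
      rw [hf, map_sub, map_sum]
      simp only [LinearIsometry.map_smul]
    rw [hmap]
    filter_upwards [Lp.coeFn_sub (I (ind s)) (∑ i ∈ Finset.range K, a i • I (e i)),
      stmt13_coeFn_sum (Finset.range K) a (fun i => I (e i))] with ω h1 h2
    simp only [h1, Pi.sub_apply, h2]
  have hEq : (fun ω => (W s ω - ∑ i ∈ Finset.range K, a i * ξ i ω) ^ 2)
      =ᵐ[P] fun ω => (I f ω) ^ 2 := by
    filter_upwards [hW s ⟨hs0, hst⟩, hIf] with ω h1 h2
    simp only [hξ, h1, h2]
  rw [integral_congr_ae hEq]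
  have hint : ∫ ω, (I f ω) ^ 2 ∂P = ‖f‖ ^ 2 := by
    rw [← I.norm_map f, ← real_inner_self_eq_norm_sq, MeasureTheory.L2.inner_def]
    refine integral_congr_ae (Filter.Eventually.of_forall fun ω => ?_)
    simp [RCLike.inner_apply, sq]
  rw [hint]
  -- compute the norm
  have hval : ‖f‖ ^ 2 = s - ∑ i ∈ Finset.range K, (a i) ^ 2 := by
    rw [hf, norm_sub_sq_real, hnorm_ind]
    have h1 : (inner ℝ (ind s) (∑ i ∈ Finset.range K, a i • e i) : ℝ)
        = ∑ i ∈ Finset.range K, (a i) ^ 2 := by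
      rw [inner_sum]
      refine Finset.sum_congr rfl fun i _ => ?_
      rw [real_inner_smul_right, hinner_ind_e]
      ring
    have h2 : ‖∑ i ∈ Finset.range K, a i • e i‖ ^ 2
        = ∑ i ∈ Finset.range K, (a i) ^ 2 := by
      rw [← real_inner_self_eq_norm_sq, inner_sum]
      refine Finset.sum_congr rfl fun j hj => ?_
      rw [real_inner_smul_right, sum_inner]
      have h3 : ∑ i ∈ Finset.range K, (inner ℝ (a i • e i) (e j) : ℝ)
          = ∑ i ∈ Finset.range K, a i * (if i = j then 1 else 0) := by
        refine Finset.sum_congr rfl fun i _ => ?_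
        rw [real_inner_smul_left, hinner_ee]
      rw [h3]
      simp only [mul_ite, mul_one, mul_zero]
      rw [Finset.sum_ite_eq' (Finset.range K) j a, if_pos hj]
      ring
    rw [h1, h2]
    ring
  rw [hval]
  -- identify the coefficients with the series terms
  have hai : ∀ i ∈ Finset.range K, (a i) ^ 2
      = (if i = 0 then s ^ 2 / t else 0) + (2 * t / π ^ 2) * g i := by
    intro i _
    by_cases hi : i = 0
    · subst hi
      simp only [if_pos rfl, hg, ha, hm0, CharP.cast_eq_zero, ↓reduceIte]
      rw [intervalIntegral.integral_const, smul_eq_mul, sub_zero]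
      rw [show (1:ℝ)/(0:ℝ)^2 = 0 by norm_num]
      rw [mul_pow, div_pow, one_pow, Real.sq_sqrt ht.le]
      field_simp
      ring
    · rw [if_neg hi, zero_add, hg, ha]
      exact stmt13_coeff_sq ht hm s (by omega)
  rw [Finset.sum_congr rfl hai, Finset.sum_add_distrib, ← Finset.mul_sum,
    Finset.sum_ite_eq' (Finset.range K) 0 (fun _ => s ^ 2 / t),
    if_pos (Finset.mem_range.mpr (by omega))]
  -- identity for s
  have hs_id : s = s ^ 2 / t + (2 * t / π ^ 2) * L := by
    rw [hL, hxdef]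
    field_simp
    ring
  -- tail bound
  have htail : L - ∑ i ∈ Finset.range K, g i ≤ 2 / K := by
    have h2 : Filter.Tendsto
        (fun n => (∑ i ∈ Finset.range n, g i) - ∑ i ∈ Finset.range K, g i)
        Filter.atTop (nhds (L - ∑ i ∈ Finset.range K, g i)) :=
      (hgsum.tendsto_sum_nat).sub_const _
    refine le_of_tendsto h2 ?_
    filter_upwards [Filter.eventually_ge_atTop K] with n hn
    rw [← Finset.sum_Ico_eq_sub _ hn]
    have hb1 : ∑ i ∈ Finset.Ico K n, g i
        ≤ ∑ i ∈ Finset.Ico K n, ((i:ℝ) ^ 2)⁻¹ := by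
      refine Finset.sum_le_sum fun i _ => ?_
      have hgi : g i = ((i:ℝ) ^ 2)⁻¹ * Real.sin (π * i * x) ^ 2 := by
        simp only [hg, one_div]
      rw [hgi]
      exact mul_le_of_le_one_right (by positivity) (Real.sin_sq_le_one _)
    refine hb1.trans ?_
    have hIco : Finset.Ico K n = Finset.Ioo (K - 1) n := by
      rw [← Finset.Ico_add_one_left_eq_Ioo]
      congr 1
      omega
    rw [hIco]
    refine (sum_Ioo_inv_sq_le (K - 1) n).trans ?_
    rw [show ((K - 1 : ℕ):ℝ) + 1 = K by
      rw [Nat.cast_sub hK]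
      push_cast
      ring]
  -- conclude
  have hfinal : s - (s ^ 2 / t + (2 * t / π ^ 2) * ∑ i ∈ Finset.range K, g i)
      = (2 * t / π ^ 2) * (L - ∑ i ∈ Finset.range K, g i) := by
    linear_combination hs_id
  rw [hfinal]
  have hcoef : (0:ℝ) ≤ 2 * t / π ^ 2 := by positivity
  calc (2 * t / π ^ 2) * (L - ∑ i ∈ Finset.range K, g i)
      ≤ (2 * t / π ^ 2) * (2 / K) := mul_le_mul_of_nonneg_left htail hcoef
    _ ≤ 1 * t / K := by
        rw [div_mul_div_comm, one_mul, div_le_div_iff₀ (by positivity) (by positivity)]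
        have h3 : 3 < π := Real.pi_gt_three
        have h9 : (9:ℝ) < π ^ 2 := by nlinarith
        have h0 : (0:ℝ) ≤ t * K := mul_nonneg ht.le hK'.le
        nlinarith [h9, h0]
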